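/- Let $(l_i)_{i\ge 1}$ be a strictly increasing sequence of positive reals and $(p_i)$ nonnegative reals summing to 1 with $p_1>0$. Then $\lim_{\alpha\to 0^+} \frac{\sum_i l_i \alpha^{l_i} p_i}{\sum_i \alpha^{l_i} p_i} = l_1$, provided the series converge for all $\alpha$ in $(0,1)$. -/

import Mathlib

open Filter Topology

/-- Routing Continuum, part (a): as α → 0⁺ the avoidance hitting cost converges to the
shortest path distance `l 0`. -/
theorem routing_continuum_limit_shortest
    (l p : ℕ → ℝ)
    (hl : StrictMono l) (hlpos : ∀ i, 0 < l i)
    (hp : ∀ i, 0 ≤ p i) (hpsum : ∑' i, p i = 1) (hp1 : 0 < p 0)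
    (hA : ∀ α ∈ Set.Ioo (0:ℝ) 1, Summable (fun i => α ^ (l i) * p i))
    (hB : ∀ α ∈ Set.Ioo (0:ℝ) 1, Summable (fun i => l i * α ^ (l i) * p i)) :
    Tendsto (fun α : ℝ => (∑' i, l i * α ^ (l i) * p i) / (∑' i, α ^ (l i) * p i))
      (𝓝[>] 0) (𝓝 (l 0)) := by
  have h2 : (0:ℝ) < 1/2 := by norm_num
  have h01 : (1:ℝ)/2 ∈ Set.Ioo (0:ℝ) 1 := by norm_num
  set δ : ℝ := l 1 - l 0 with hδdef
  have hδ : 0 < δ := sub_pos.2 (hl Nat.zero_lt_one)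
  have hlmono : ∀ i, l 0 ≤ l i := fun i => hl.monotone (Nat.zero_le i)
  -- summability of the shifted series
  have hSum : ∀ α ∈ Set.Ioo (0:ℝ) 1,
      Summable (fun i => (l i - l 0) * α ^ (l i) * p i) := by
    intro α hα
    have := (hB α hα).sub ((hA α hα).mul_left (l 0))
    refine this.congr fun i => ?_
    ring
  set T : ℝ → ℝ := fun α => ∑' i, (l i - l 0) * α ^ (l i) * p i with hTdef
  set F : ℝ → ℝ := fun α => ∑' i, α ^ (l i) * p i with hFdef
  set G : ℝ → ℝ := fun α => ∑' i, l i * α ^ (l i) * p i with hGdef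
  -- positivity of F
  have hFpos : ∀ α ∈ Set.Ioo (0:ℝ) 1, α ^ (l 0) * p 0 ≤ F α ∧ 0 < F α := by
    intro α hα
    have hle : α ^ (l 0) * p 0 ≤ F α := by
      refine Summable.le_tsum (hA α hα) 0 fun j _ => ?_
      exact mul_nonneg (Real.rpow_nonneg hα.1.le _) (hp j)
    exact ⟨hle, lt_of_lt_of_le (mul_pos (Real.rpow_pos_of_pos hα.1 _) hp1) hle⟩
  -- decomposition of the ratio
  have hdecomp : ∀ α ∈ Set.Ioo (0:ℝ) 1, G α / F α = l 0 + T α / F α := by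
    intro α hα
    have hT : T α = G α - l 0 * F α := by
      have : (fun i => (l i - l 0) * α ^ (l i) * p i)
          = fun i => l i * α ^ (l i) * p i - l 0 * (α ^ (l i) * p i) :=
        funext fun i => by ring
      rw [hTdef]
      simp only [this]
      rw [Summable.tsum_sub (hB α hα) ((hA α hα).mul_left (l 0)), tsum_mul_left]
    have hF0 : F α ≠ 0 := (hFpos α hα).2.ne'
    rw [hT]
    field_simp
    ring
  -- the constant K
  set K : ℝ := ∑' i, (l i - l 0) * ((1:ℝ)/2) ^ (l i - l 0 - δ) * p i with hKdef
  have hKsum : Summable (fun i => (l i - l 0) * ((1:ℝ)/2) ^ (l i - l 0 - δ) * p i) := by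
    have := (hSum (1/2) h01).mul_left (((1:ℝ)/2) ^ (-(l 0 + δ)))
    refine this.congr fun i => ?_
    rw [show l i - l 0 - δ = -(l 0 + δ) + l i by ring, Real.rpow_add h2]
    ring
  have hKnonneg : 0 ≤ K := by
    refine tsum_nonneg fun i => ?_
    exact mul_nonneg (mul_nonneg (sub_nonneg.2 (hlmono i)) (Real.rpow_nonneg h2.le _)) (hp i)
  -- termwise bound on T
  have hTbound : ∀ α ∈ Set.Ioo (0:ℝ) (1/2), T α ≤ α ^ (l 0 + δ) * K := by
    intro α hα
    have hα1 : α ∈ Set.Ioo (0:ℝ) 1 := ⟨hα.1, lt_trans hα.2 (by norm_num)⟩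
    rw [hKdef, ← tsum_mul_left]
    refine Summable.tsum_le_tsum (fun i => ?_) (hSum α hα1) (hKsum.mul_left _)
    rcases Nat.eq_zero_or_pos i with rfl | hi
    · simp
    · have hexp : 0 ≤ l i - l 0 - δ := by
        have : l 1 ≤ l i := hl.monotone hi
        simp only [hδdef]; linarith
      have h1 : α ^ (l i) = α ^ (l 0 + δ) * α ^ (l i - l 0 - δ) := by
        rw [← Real.rpow_add hα.1]; ring_nf
      have h2' : α ^ (l i - l 0 - δ) ≤ ((1:ℝ)/2) ^ (l i - l 0 - δ) :=
        Real.rpow_le_rpow hα.1.le hα.2.le hexp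
      calc (l i - l 0) * α ^ (l i) * p i
          = α ^ (l 0 + δ) * ((l i - l 0) * α ^ (l i - l 0 - δ) * p i) := by
            rw [h1]; ring
        _ ≤ α ^ (l 0 + δ) * ((l i - l 0) * ((1:ℝ)/2) ^ (l i - l 0 - δ) * p i) := by
            refine mul_le_mul_of_nonneg_left ?_ (Real.rpow_nonneg hα.1.le _)
            refine mul_le_mul_of_nonneg_right ?_ (hp i)
            exact mul_le_mul_of_nonneg_left h2' (sub_nonneg.2 (hlmono i))
  -- T α / F α → 0
  have hmem : Set.Ioo (0:ℝ) (1/2) ∈ 𝓝[>] (0:ℝ) :=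
    Ioo_mem_nhdsGT_of_mem (by constructor <;> norm_num)
  have hTF : Tendsto (fun α => T α / F α) (𝓝[>] (0:ℝ)) (𝓝 0) := by
    have hbound : Tendsto (fun α : ℝ => α ^ δ * (K / p 0)) (𝓝[>] (0:ℝ)) (𝓝 0) := by
      have hc : ContinuousAt (fun x : ℝ => x ^ δ) 0 :=
        Real.continuousAt_rpow_const 0 δ (Or.inr hδ.le)
      have h0 : Tendsto (fun x : ℝ => x ^ δ) (𝓝[>] (0:ℝ)) (𝓝 0) := by
        have := hc.tendsto.mono_left (nhdsWithin_le_nhds (s := Set.Ioi (0:ℝ)))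
        rwa [Real.zero_rpow hδ.ne'] at this
      simpa using h0.mul_const (K / p 0)
    refine squeeze_zero' ?_ ?_ hbound
    · filter_upwards [hmem] with α hα
      have hα1 : α ∈ Set.Ioo (0:ℝ) 1 := ⟨hα.1, lt_trans hα.2 (by norm_num)⟩
      refine div_nonneg (tsum_nonneg fun i => ?_) (hFpos α hα1).2.le
      exact mul_nonneg (mul_nonneg (sub_nonneg.2 (hlmono i)) (Real.rpow_nonneg hα.1.le _)) (hp i)
    · filter_upwards [hmem] with α hα
      have hα1 : α ∈ Set.Ioo (0:ℝ) 1 := ⟨hα.1, lt_trans hα.2 (by norm_num)⟩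
      rw [div_le_iff₀ (hFpos α hα1).2]
      calc T α ≤ α ^ (l 0 + δ) * K := hTbound α hα
        _ = α ^ δ * (K / p 0) * (α ^ (l 0) * p 0) := by
            rw [Real.rpow_add hα.1]
            field_simp
        _ ≤ α ^ δ * (K / p 0) * F α := by
            refine mul_le_mul_of_nonneg_left (hFpos α hα1).1 ?_
            exact mul_nonneg (Real.rpow_nonneg hα.1.le _) (div_nonneg hKnonneg hp1.le)
  -- conclude
  have heq : (fun α : ℝ => G α / F α) =ᶠ[𝓝[>] (0:ℝ)] fun α => l 0 + T α / F α := by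
    filter_upwards [hmem] with α hα
    exact hdecomp α ⟨hα.1, lt_trans hα.2 (by norm_num)⟩
  have : Tendsto (fun α => l 0 + T α / F α) (𝓝[>] (0:ℝ)) (𝓝 (l 0 + 0)) :=
    tendsto_const_nhds.add hTF
  rw [add_zero] at this
  exact this.congr' heq.symm
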